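/- Let 0 ≤ α < 1, c > 0, and x, y real with x² + y² < 1 and x, y ≥ 0, and suppose 0 < c ≤ c_α where c_α < π²/4 is the smallest positive root of 2√t - (1+α) tan √t = 0. Then sin(√c x) cos(√c x) [2√c x - (1+α) tan(√c x)] ≥ sinh(√c y) cosh(√c y) [(1+α) tanh(√c y) - 2√c y], with strict inequality unless both sides vanish appropriately. -/

import Mathlib

open Real

lemma sinh_le_mul_cosh {s : ℝ} (hs : 0 ≤ s) : Real.sinh s ≤ s * Real.cosh s := by
  have hmono : MonotoneOn (fun t : ℝ => t * Real.cosh t - Real.sinh t) (Set.Ici 0) := by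
    apply monotoneOn_of_deriv_nonneg (convex_Ici 0)
    · exact (Continuous.sub (continuous_id.mul Real.continuous_cosh)
        Real.continuous_sinh).continuousOn
    · intro t ht
      exact (((hasDerivAt_id t).mul (Real.hasDerivAt_cosh t)).sub
        (Real.hasDerivAt_sinh t)).differentiableAt.differentiableWithinAt
    · intro t ht
      rw [interior_Ici] at ht
      have hd : HasDerivAt (fun t : ℝ => t * Real.cosh t - Real.sinh t)
          (1 * Real.cosh t + t * Real.sinh t - Real.cosh t) t :=
        ((hasDerivAt_id t).mul (Real.hasDerivAt_cosh t)).sub (Real.hasDerivAt_sinh t)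
      rw [hd.deriv]
      have : (0:ℝ) ≤ t * Real.sinh t :=
        mul_nonneg ht.le (Real.sinh_nonneg_iff.mpr ht.le)
      linarith
  have := hmono (Set.self_mem_Ici) (Set.mem_Ici.mpr hs) hs
  simp only [Real.sinh_zero, Real.cosh_zero, mul_one, zero_mul, sub_zero] at this
  linarith

lemma tan_convexOn {a : ℝ} (ha0 : 0 < a) (ha : a < π / 2) :
    ConvexOn ℝ (Set.Icc 0 a) Real.tan := by
  have hcospos : ∀ t ∈ Set.Icc (0:ℝ) a, 0 < Real.cos t := fun t ht =>
    Real.cos_pos_of_mem_Ioo ⟨by linarith [ht.1, Real.pi_pos], lt_of_le_of_lt ht.2 ha⟩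
  apply convexOn_of_hasDerivWithinAt2_nonneg (f' := fun t => 1 / Real.cos t ^ 2)
    (f'' := fun t => (2 * Real.sin t * Real.cos t) / (Real.cos t ^ 2) ^ 2)
    (convex_Icc 0 a)
  · exact Real.continuousOn_tan.mono fun t ht => (hcospos t ht).ne'
  · intro t ht
    rw [interior_Icc] at ht
    exact (Real.hasDerivAt_tan (hcospos t (Set.mem_Icc_of_Ioo ht)).ne').hasDerivWithinAt
  · intro t ht
    rw [interior_Icc] at ht
    have hc := (hcospos t (Set.mem_Icc_of_Ioo ht)).ne'
    have hg : HasDerivAt (fun t : ℝ => Real.cos t ^ 2)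
        (2 * Real.cos t ^ 1 * -Real.sin t) t := (Real.hasDerivAt_cos t).pow 2
    have : HasDerivAt (fun t : ℝ => 1 / Real.cos t ^ 2)
        ((0 * Real.cos t ^ 2 - 1 * (2 * Real.cos t ^ 1 * -Real.sin t)) / (Real.cos t ^ 2) ^ 2)
        t := (hasDerivAt_const t 1).div hg (pow_ne_zero 2 hc)
    exact this.hasDerivWithinAt.congr_deriv (by ring)
  · intro t ht
    rw [interior_Icc] at ht
    have h1 : 0 ≤ Real.sin t := Real.sin_nonneg_of_nonneg_of_le_pi ht.1.le
      (by linarith [ht.2, Real.pi_pos])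
    have h2 : 0 < Real.cos t := hcospos t (Set.mem_Icc_of_Ioo ht)
    positivity

lemma tan_chord {a s : ℝ} (ha0 : 0 < a) (ha : a < π / 2) (hs0 : 0 ≤ s) (hsa : s ≤ a) :
    a * Real.tan s ≤ s * Real.tan a := by
  have hconv := tan_convexOn ha0 ha
  have hu : (0:ℝ) ≤ 1 - s / a := by
    rw [sub_nonneg, div_le_one ha0]; exact hsa
  have hv : (0:ℝ) ≤ s / a := div_nonneg hs0 ha0.le
  have key := hconv.2 (Set.left_mem_Icc.mpr ha0.le) (Set.right_mem_Icc.mpr ha0.le)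
    hu hv (by ring)
  simp only [smul_eq_mul, mul_zero, zero_add, Real.tan_zero] at key
  have hsa' : s / a * a = s := div_mul_cancel₀ s ha0.ne'
  rw [hsa'] at key
  calc a * Real.tan s ≤ a * (s / a * Real.tan a) := by
        have := mul_le_mul_of_nonneg_left key ha0.le
        linarith
    _ = s * Real.tan a := by field_simp

/-- The key real-variable inequality: for `0 ≤ α < 1`, `0 < c ≤ c_α`, `x, y ≥ 0` with
`x² + y² < 1`,
`sin(√c x) cos(√c x) [2√c x - (1+α) tan(√c x)] ≥
  sinh(√c y) cosh(√c y) [(1+α) tanh(√c y) - 2√c y]`. -/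
theorem key_inequality (α cα c x y : ℝ) (hα0 : 0 ≤ α) (hα1 : α < 1)
    (hcα0 : 0 < cα) (hcαπ : cα < π ^ 2 / 4)
    (hroot : 2 * Real.sqrt cα - (1 + α) * Real.tan (Real.sqrt cα) = 0)
    (hmin : ∀ t : ℝ, 0 < t →
      2 * Real.sqrt t - (1 + α) * Real.tan (Real.sqrt t) = 0 → cα ≤ t)
    (hc0 : 0 < c) (hc : c ≤ cα)
    (hx : 0 ≤ x) (hy : 0 ≤ y) (hxy : x ^ 2 + y ^ 2 < 1) :
    Real.sin (Real.sqrt c * x) * Real.cos (Real.sqrt c * x) *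
        (2 * Real.sqrt c * x - (1 + α) * Real.tan (Real.sqrt c * x)) ≥
      Real.sinh (Real.sqrt c * y) * Real.cosh (Real.sqrt c * y) *
        ((1 + α) * Real.tanh (Real.sqrt c * y) - 2 * Real.sqrt c * y) := by
  set a := Real.sqrt cα with ha_def
  have ha0 : 0 < a := Real.sqrt_pos.mpr hcα0
  have hpi : a < π / 2 := by
    have : Real.sqrt cα < Real.sqrt (π ^ 2 / 4) := by
      exact Real.sqrt_lt_sqrt hcα0.le hcαπ
    have hπ : Real.sqrt (π ^ 2 / 4) = π / 2 := by
      rw [show π ^ 2 / 4 = (π / 2) ^ 2 by ring, Real.sqrt_sq (by positivity)]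
    linarith [this, hπ ▸ this]
  -- setup for x-side
  set s := Real.sqrt c * x with hs_def
  have hx1 : x < 1 := by nlinarith [sq_nonneg y]
  have hsqc : Real.sqrt c ≤ a := Real.sqrt_le_sqrt hc
  have hsqc0 : 0 < Real.sqrt c := Real.sqrt_pos.mpr hc0
  have hs0 : 0 ≤ s := mul_nonneg hsqc0.le hx
  have hsa : s ≤ a := by
    calc s ≤ a * x := mul_le_mul_of_nonneg_right hsqc hx
      _ ≤ a * 1 := mul_le_mul_of_nonneg_left hx1.le ha0.le
      _ = a := mul_one a
  have hspi : s < π / 2 := lt_of_le_of_lt hsa hpi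
  -- LHS ≥ 0
  have hsin : 0 ≤ Real.sin s := Real.sin_nonneg_of_nonneg_of_le_pi hs0
    (by linarith [Real.pi_pos])
  have hcos : 0 < Real.cos s := Real.cos_pos_of_mem_Ioo ⟨by linarith [Real.pi_pos], hspi⟩
  have htana : Real.tan a = 2 * a / (1 + α) := by
    field_simp
    linarith [hroot]
  have htan : (1 + α) * Real.tan s ≤ 2 * s := by
    have hch := tan_chord ha0 hpi hs0 hsa
    rw [htana] at hch
    have h1 : 0 < 1 + α := by linarith
    rw [div_eq_mul_inv] at hch
    have : a * ((1 + α) * Real.tan s) ≤ a * (2 * s) := by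
      have := mul_le_mul_of_nonneg_left hch h1.le
      calc a * ((1 + α) * Real.tan s) = (1 + α) * (a * Real.tan s) := by ring
        _ ≤ (1 + α) * (s * (2 * a * (1 + α)⁻¹)) := this
        _ = a * (2 * s) := by field_simp
    exact le_of_mul_le_mul_left this ha0
  have hLHS : 0 ≤ Real.sin s * Real.cos s * (2 * Real.sqrt c * x - (1 + α) * Real.tan s) := by
    apply mul_nonneg (mul_nonneg hsin hcos.le)
    have : 2 * Real.sqrt c * x = 2 * s := by rw [hs_def]; ring
    linarith
  -- RHS ≤ 0
  set r := Real.sqrt c * y with hr_def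
  have hr0 : 0 ≤ r := mul_nonneg hsqc0.le hy
  have hcoshr : 0 < Real.cosh r := Real.cosh_pos r
  have htanh : Real.tanh r ≤ r := by
    rw [Real.tanh_eq_sinh_div_cosh, div_le_iff₀ hcoshr]
    exact sinh_le_mul_cosh hr0
  have htanh0 : 0 ≤ Real.tanh r := by
    rw [Real.tanh_eq_sinh_div_cosh]
    exact div_nonneg (Real.sinh_nonneg_iff.mpr hr0) hcoshr.le
  have hRHS : Real.sinh r * Real.cosh r * ((1 + α) * Real.tanh r - 2 * Real.sqrt c * y) ≤ 0 := by
    apply mul_nonpos_of_nonneg_of_nonpos (mul_nonneg (Real.sinh_nonneg_iff.mpr hr0) hcoshr.le)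
    have h2r : 2 * Real.sqrt c * y = 2 * r := by rw [hr_def]; ring
    nlinarith
  linarith
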